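/- Conditions with arbitrarily long strings are dense: assume μ is a finite measure on 2^ω, each set A k s is measurable, A k s ⊆ A k s′ whenever s ≤ s′, and Dom ⊆ ⋃_s A k s for every k. Then for every condition p and every n ∈ ℕ there is a condition q extending p with n^q > n. -/

import Mathlib

open MeasureTheory

/-- A forcing condition: a finite string of naturals together with a positive
rational promise. -/
structure Cond where
  f : List ℕ
  ε : ℚ
  pos : 0 < ε

/-- `Dseg A g n m` is the set `D_{[n,m)}[g] = ⋂_{k ∈ [n,m)} A k (g k)`. -/
def Dseg (A : ℕ → ℕ → Set (ℕ → Bool)) (g : List ℕ) (n m : ℕ) : Set (ℕ → Bool) :=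
  ⋂ k ∈ Set.Ico n m, A k (g.getD k 0)

/-- The condition `q = (g, δ)` extends the condition `p = (f, ε)`: `f` is an initial
segment of `g`, `δ ≤ ε`, and if `f ≠ g` then `μ(Dom \ D_{[|f|,|g|)}[g]) + δ < ε`. -/
def Extends (μ : Measure (ℕ → Bool)) (Dom : Set (ℕ → Bool))
    (A : ℕ → ℕ → Set (ℕ → Bool)) (q p : Cond) : Prop :=
  p.f <+: q.f ∧ q.ε ≤ p.ε ∧
    (p.f ≠ q.f →
      μ (Dom \ Dseg A q.f p.f.length q.f.length) + ENNReal.ofReal (q.ε : ℝ) <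
        ENNReal.ofReal (p.ε : ℝ))

lemma extends_refl (μ : Measure (ℕ → Bool)) (Dom : Set (ℕ → Bool))
    (A : ℕ → ℕ → Set (ℕ → Bool)) (p : Cond) : Extends μ Dom A p p :=
  ⟨List.prefix_refl _, le_refl _, fun h => absurd rfl h⟩

lemma Dseg_congr {A : ℕ → ℕ → Set (ℕ → Bool)} {g g' : List ℕ} (h : g <+: g')
    {n m : ℕ} (hm : m ≤ g.length) : Dseg A g' n m = Dseg A g n m := by
  unfold Dseg
  apply Set.iInter₂_congr
  intro k hk
  rcases h with ⟨t, rfl⟩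
  rw [List.getD_append _ _ _ _ (lt_of_lt_of_le hk.2 hm)]

lemma Dseg_inter_subset {A : ℕ → ℕ → Set (ℕ → Bool)} {g : List ℕ} {n m l : ℕ} :
    Dseg A g n m ∩ Dseg A g m l ⊆ Dseg A g n l := by
  intro x hx
  simp only [Dseg, Set.mem_inter_iff, Set.mem_iInter, Set.mem_Ico] at *
  intro k hk
  rcases lt_or_ge k m with h | h
  · exact hx.1 k ⟨hk.1, h⟩
  · exact hx.2 k ⟨h, hk.2⟩

lemma extends_trans (μ : Measure (ℕ → Bool)) (Dom : Set (ℕ → Bool))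
    (A : ℕ → ℕ → Set (ℕ → Bool)) {p q r : Cond}
    (hqr : Extends μ Dom A r q) (hpq : Extends μ Dom A q p) :
    Extends μ Dom A r p := by
  obtain ⟨pre1, le1, h1⟩ := hpq
  obtain ⟨pre2, le2, h2⟩ := hqr
  have hofle : ENNReal.ofReal (q.ε : ℝ) ≤ ENNReal.ofReal (p.ε : ℝ) :=
    ENNReal.ofReal_le_ofReal (by exact_mod_cast le1)
  have hofle2 : ENNReal.ofReal (r.ε : ℝ) ≤ ENNReal.ofReal (q.ε : ℝ) :=
    ENNReal.ofReal_le_ofReal (by exact_mod_cast le2)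
  refine ⟨pre1.trans pre2, le2.trans le1, ?_⟩
  intro hne
  by_cases hpq' : p.f = q.f
  · have hq : q.f ≠ r.f := fun h => hne (hpq'.trans h)
    have := h2 hq
    rw [hpq']
    exact lt_of_lt_of_le this hofle
  · by_cases hqr' : q.f = r.f
    · have := h1 hpq'
      rw [← hqr']
      calc μ (Dom \ Dseg A q.f p.f.length q.f.length) + ENNReal.ofReal (r.ε : ℝ)
          ≤ μ (Dom \ Dseg A q.f p.f.length q.f.length) + ENNReal.ofReal (q.ε : ℝ) :=
            add_le_add_right hofle2 _
        _ < ENNReal.ofReal (p.ε : ℝ) := this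
    · have key : Dom \ Dseg A r.f p.f.length r.f.length ⊆
          (Dom \ Dseg A r.f p.f.length q.f.length) ∪
            (Dom \ Dseg A r.f q.f.length r.f.length) := by
        intro x hx
        by_cases h : x ∈ Dseg A r.f p.f.length q.f.length
        · right
          refine ⟨hx.1, fun hc => hx.2 (Dseg_inter_subset ⟨h, hc⟩)⟩
        · left; exact ⟨hx.1, h⟩
      have hcg : Dseg A r.f p.f.length q.f.length = Dseg A q.f p.f.length q.f.length :=
        Dseg_congr pre2 le_rfl
      have hsum : μ (Dom \ Dseg A r.f p.f.length r.f.length) ≤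
          μ (Dom \ Dseg A q.f p.f.length q.f.length) +
            μ (Dom \ Dseg A r.f q.f.length r.f.length) := by
        rw [← hcg]
        exact (measure_mono key).trans (measure_union_le _ _)
      calc μ (Dom \ Dseg A r.f p.f.length r.f.length) + ENNReal.ofReal (r.ε : ℝ)
          ≤ μ (Dom \ Dseg A q.f p.f.length q.f.length) +
              (μ (Dom \ Dseg A r.f q.f.length r.f.length) + ENNReal.ofReal (r.ε : ℝ)) := by
            rw [← add_assoc]; exact add_le_add_left hsum _
        _ ≤ μ (Dom \ Dseg A q.f p.f.length q.f.length) + ENNReal.ofReal (q.ε : ℝ) :=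
            add_le_add_right (h2 hqr').le _
        _ < ENNReal.ofReal (p.ε : ℝ) := h1 hpq'

lemma one_step (μ : Measure (ℕ → Bool)) [IsFiniteMeasure μ]
    (Dom : Set (ℕ → Bool)) (A : ℕ → ℕ → Set (ℕ → Bool))
    (hmeas : ∀ k s, MeasurableSet (A k s))
    (hmono : ∀ k, ∀ s s' : ℕ, s ≤ s' → A k s ⊆ A k s')
    (hdom : ∀ k, Dom ⊆ ⋃ s : ℕ, A k s) (p : Cond) :
    ∃ q : Cond, Extends μ Dom A q p ∧ q.f.length = p.f.length + 1 := by
  set k := p.f.length with hk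
  set U := ⋃ s, A k s with hU
  set E := toMeasurable μ Dom ∩ U with hE
  have hEmeas : MeasurableSet E :=
    (measurableSet_toMeasurable μ Dom).inter (MeasurableSet.iUnion fun s => hmeas k s)
  have hanti : Antitone (fun s => E \ A k s) := fun s t hst =>
    Set.diff_subset_diff_right (hmono k s t hst)
  have hinter : ⋂ s, (E \ A k s) = ∅ := by
    ext x
    simp only [Set.mem_iInter, Set.mem_diff, Set.mem_empty_iff_false, iff_false, not_forall]
    by_cases hx : x ∈ E
    · obtain ⟨s, hs⟩ := Set.mem_iUnion.mp hx.2
      exact ⟨s, fun hc => hc.2 hs⟩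
    · exact ⟨0, fun hc => hx hc.1⟩
  have htend : Filter.Tendsto (fun s => μ (E \ A k s)) Filter.atTop (nhds 0) := by
    have := MeasureTheory.tendsto_measure_iInter_atTop
      (fun s => (hEmeas.diff (hmeas k s)).nullMeasurableSet) hanti
      ⟨0, (measure_lt_top μ _).ne⟩
    rw [hinter, measure_empty] at this
    exact this
  have hεpos : (0:ℝ) < ((p.ε / 2 : ℚ) : ℝ) := by
    have hp := p.pos
    exact_mod_cast (by linarith : (0:ℚ) < p.ε / 2)
  have hpos : (0:ENNReal) < ENNReal.ofReal ((p.ε / 2 : ℚ) : ℝ) :=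
    ENNReal.ofReal_pos.mpr hεpos
  obtain ⟨s, hs⟩ := (htend.eventually_lt_const hpos).exists
  have hq2 : (0:ℚ) < p.ε / 2 := by have := p.pos; linarith
  refine ⟨⟨p.f ++ [s], p.ε / 2, hq2⟩, ⟨⟨[s], rfl⟩, by have := p.pos; linarith, ?_⟩, by simp [hk]⟩
  intro _
  have hlen : (p.f ++ [s]).length = k + 1 := by simp [hk]
  have hD : Dseg A (p.f ++ [s]) k (k + 1) = A k s := by
    unfold Dseg
    rw [show Set.Ico k (k+1) = {k} by ext i; simp [Set.mem_Ico, Nat.lt_succ_iff]; omega,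
      Set.biInter_singleton]
    rw [List.getD_append_right _ _ _ _ le_rfl]
    simp [hk]
  simp only [hlen, ← hk, hD]
  have hsub : Dom \ A k s ⊆ E \ A k s :=
    Set.diff_subset_diff_left (Set.subset_inter (subset_toMeasurable μ Dom) (hdom k))
  have h1 : μ (Dom \ A k s) < ENNReal.ofReal ((p.ε / 2 : ℚ) : ℝ) :=
    lt_of_le_of_lt (measure_mono hsub) hs
  have heq : ENNReal.ofReal ((p.ε / 2 : ℚ) : ℝ) + ENNReal.ofReal ((p.ε / 2 : ℚ) : ℝ)
      = ENNReal.ofReal ((p.ε : ℚ) : ℝ) := by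
    rw [← ENNReal.ofReal_add hεpos.le hεpos.le]
    congr 1
    push_cast
    ring
  calc μ (Dom \ A k s) + ENNReal.ofReal ((p.ε / 2 : ℚ) : ℝ)
      < ENNReal.ofReal ((p.ε / 2 : ℚ) : ℝ) + ENNReal.ofReal ((p.ε / 2 : ℚ) : ℝ) :=
        ENNReal.add_lt_add_right ENNReal.ofReal_ne_top h1
    _ = ENNReal.ofReal ((p.ε : ℚ) : ℝ) := heq

/-- Conditions with arbitrarily long strings are dense. -/
theorem dense_long_conditions
    (μ : Measure (ℕ → Bool)) [IsFiniteMeasure μ]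
    (Dom : Set (ℕ → Bool)) (A : ℕ → ℕ → Set (ℕ → Bool))
    (hmeas : ∀ k s, MeasurableSet (A k s))
    (hmono : ∀ k, ∀ s s' : ℕ, s ≤ s' → A k s ⊆ A k s')
    (hdom : ∀ k, Dom ⊆ ⋃ s : ℕ, A k s)
    (p : Cond) (n : ℕ) :
    ∃ q : Cond, Extends μ Dom A q p ∧ n < q.f.length := by
  have main : ∀ m : ℕ, ∀ p : Cond, ∃ q : Cond, Extends μ Dom A q p ∧ m ≤ q.f.length := by
    intro m
    induction m with
    | zero => exact fun p => ⟨p, extends_refl μ Dom A p, Nat.zero_le _⟩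
    | succ m ih =>
      intro p
      obtain ⟨q, hq, hlen⟩ := ih p
      rcases Nat.lt_or_ge m q.f.length with h | h
      · exact ⟨q, hq, h⟩
      · obtain ⟨r, hr, hlen'⟩ := one_step μ Dom A hmeas hmono hdom q
        exact ⟨r, extends_trans μ Dom A hr hq, by omega⟩
  obtain ⟨q, hq, hlen⟩ := main (n + 1) p
  exact ⟨q, hq, hlen⟩
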